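/- The functions x ↦ exp(−x²) and x ↦ x·exp(−x²) generate C₀(ℝ) as a C*-algebra: the smallest closed non-unital star-subalgebra of the algebra C₀(ℝ, ℂ) of continuous complex-valued functions on ℝ vanishing at infinity that contains these two functions is all of C₀(ℝ, ℂ). -/

import Mathlib

open scoped ZeroAtInfty

open scoped ContinuousMapZero

open OnePoint Set Filter in
/-- If `h ∈ C₀(ℝ, ℂ)` is injective and nowhere zero, then any closed nonunital star subalgebra
containing `h` is everything. -/
lemma aux_generates (h : C₀(ℝ, ℂ)) (hinj : Function.Injective h)
    (hne : ∀ x : ℝ, h x ≠ 0)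
    (A : NonUnitalStarSubalgebra ℂ C₀(ℝ, ℂ)) (hA : h ∈ A) :
    A.topologicalClosure = ⊤ := by
  have htend : Tendsto (⇑h) (coclosedCompact ℝ) (nhds 0) := by
    rw [coclosedCompact_eq_cocompact]
    exact zero_at_infty h
  let H : C(OnePoint ℝ, ℂ) := OnePoint.continuousMapMk h.toContinuousMap 0 htend
  have Hcoe : ∀ x : ℝ, H (x : OnePoint ℝ) = h x := fun x => rfl
  have Hinf : H ∞ = 0 := rfl
  have Hinj : Function.Injective H := by
    intro a b hab
    induction a using OnePoint.rec <;> induction b using OnePoint.rec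
    · rfl
    · exact absurd ((Hcoe _).symm.trans hab.symm) (hne _)
    · exact absurd ((Hcoe _).symm.trans hab) (hne _)
    · exact congrArg _ (hinj ((Hcoe _).symm.trans (hab.trans (Hcoe _))))
  set s : Set ℂ := Set.range H with hs
  haveI : CompactSpace s := isCompact_iff_compactSpace.mp (isCompact_range H.continuous)
  letI : Zero s := ⟨⟨0, ⟨∞, Hinf⟩⟩⟩
  have h0 : ((0 : s) : ℂ) = 0 := rfl
  haveI : Fact ((0 : ℂ) ∈ s) := ⟨⟨∞, Hinf⟩⟩
  let E : OnePoint ℝ ≃ₜ s :=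
    Continuous.homeoOfEquivCompactToT2
      (f := Equiv.ofBijective (Set.rangeFactorization H)
        ⟨fun a b hab => Hinj (congrArg Subtype.val hab), Set.rangeFactorization_surjective⟩)
      (Continuous.subtype_mk H.continuous _)
  have hEcoe : ∀ z : OnePoint ℝ, ((E z : ℂ)) = H z := fun z => rfl
  have hEinf : E ∞ = 0 := Subtype.ext Hinf
  -- pull back elements of the adjoin of `id` on `s`
  have key : ∀ p ∈ NonUnitalStarAlgebra.adjoin ℂ {ContinuousMapZero.id s},
      ∃ a ∈ A, ∀ x : ℝ, a x = p (E (x : OnePoint ℝ)) := by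
    intro p hp
    induction hp using NonUnitalStarAlgebra.adjoin_induction with
    | mem q hq =>
      refine ⟨h, hA, fun x => ?_⟩
      rw [Set.mem_singleton_iff.mp hq]
      exact ((hEcoe (x : OnePoint ℝ)).trans (Hcoe x)).symm
    | add q r _ _ hq hr =>
      obtain ⟨a, haA, ha⟩ := hq
      obtain ⟨b, hbA, hb⟩ := hr
      exact ⟨a + b, add_mem haA hbA, fun x => by simp [ha x, hb x]⟩
    | zero => exact ⟨0, zero_mem A, fun x => rfl⟩
    | mul q r _ _ hq hr =>
      obtain ⟨a, haA, ha⟩ := hq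
      obtain ⟨b, hbA, hb⟩ := hr
      exact ⟨a * b, mul_mem haA hbA, fun x => by simp [ha x, hb x]⟩
    | smul r q _ hq =>
      obtain ⟨a, haA, ha⟩ := hq
      exact ⟨r • a, SMulMemClass.smul_mem r haA, fun x => by simp [ha x]⟩
    | star q _ hq =>
      obtain ⟨a, haA, ha⟩ := hq
      exact ⟨star a, star_mem haA, fun x => by simp [ha x]⟩
  refine SetLike.ext fun u => ⟨fun _ => trivial, fun _ => ?_⟩
  show u ∈ closure (A : Set C₀(ℝ, ℂ))
  rw [Metric.mem_closure_iff]
  intro ε hε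
  -- build the element of `C(s, ℂ)₀` corresponding to `u`
  have utend : Tendsto (⇑u) (coclosedCompact ℝ) (nhds 0) := by
    rw [coclosedCompact_eq_cocompact]
    exact zero_at_infty u
  let U : C(OnePoint ℝ, ℂ) := OnePoint.continuousMapMk u.toContinuousMap 0 utend
  have hUinf : U ∞ = 0 := rfl
  let w : C(s, ℂ)₀ :=
    ⟨U.comp (E.symm : C(s, OnePoint ℝ)), by
      show U (E.symm 0) = 0
      rw [show E.symm 0 = ∞ from E.symm_apply_eq.mpr hEinf.symm]
      exact hUinf⟩
  have hw : ∀ x : ℝ, w (E (x : OnePoint ℝ)) = u x := fun x => by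
    show U (E.symm (E (x : OnePoint ℝ))) = u x
    rw [Homeomorph.symm_apply_apply]
    rfl
  -- density of the adjoin of `id` in `C(s, ℂ)₀`
  have hd := ContinuousMapZero.adjoin_id_dense (𝕜 := ℂ) s
  have hwc : w ∈ closure (NonUnitalStarAlgebra.adjoin ℂ
      {ContinuousMapZero.id s} : Set C(s, ℂ)₀) := hd.closure_eq ▸ Set.mem_univ w
  rw [Metric.mem_closure_iff] at hwc
  obtain ⟨p, hp, hdist⟩ := hwc ε hε
  obtain ⟨a, haA, ha⟩ := key p hp
  refine ⟨a, haA, ?_⟩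
  rw [dist_eq_norm]
  calc ‖u - a‖ ≤ dist w p := by
        rw [← ZeroAtInftyContinuousMap.norm_toBCF_eq_norm]
        refine (BoundedContinuousFunction.norm_le dist_nonneg).mpr fun x => ?_
        have : (u - a) x = w (E (x : OnePoint ℝ)) - p (E (x : OnePoint ℝ)) := by
          simp [hw x, ha x]
        rw [show ((u - a).toBCF x) = (u - a) x from rfl, this, ← dist_eq_norm]
        exact ContinuousMap.dist_apply_le_dist _
    _ < ε := hdist

/-- The functions `x ↦ exp(−x²)` and `x ↦ x·exp(−x²)` generate `C₀(ℝ, ℂ)` as a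
C*-algebra: the closure of the non-unital star-subalgebra they generate is everything. -/
theorem gaussian_generates_C0
    (f g : C₀(ℝ, ℂ))
    (hf : ∀ x : ℝ, f x = Complex.exp (-(x ^ 2 : ℝ)))
    (hg : ∀ x : ℝ, g x = (x : ℂ) * Complex.exp (-(x ^ 2 : ℝ))) :
    (NonUnitalStarAlgebra.adjoin ℂ {f, g}).topologicalClosure = ⊤ := by
  set h : C₀(ℝ, ℂ) := f + Complex.I • g with hh
  have hval : ∀ x : ℝ,
      h x = Complex.exp (-(x ^ 2 : ℝ)) + Complex.I * ((x : ℂ) * Complex.exp (-(x ^ 2 : ℝ))) := by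
    intro x
    simp [hh, hf x, hg x]
  have e : ∀ x : ℝ, Complex.exp (-((x ^ 2 : ℝ) : ℂ)) = ((Real.exp (-(x ^ 2)) : ℝ) : ℂ) := by
    intro x
    rw [Complex.ofReal_exp]
    norm_cast
  have hre : ∀ x : ℝ, (h x).re = Real.exp (-(x ^ 2)) := by
    intro x
    rw [hval x, e x]
    simp [-Complex.ofReal_exp]
  have him : ∀ x : ℝ, (h x).im = x * Real.exp (-(x ^ 2)) := by
    intro x
    rw [hval x, e x]
    simp [-Complex.ofReal_exp]
  have hinj : Function.Injective h := by
    intro x y hxy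
    have h1 : Real.exp (-(x ^ 2)) = Real.exp (-(y ^ 2)) := by
      rw [← hre x, ← hre y, hxy]
    have h2 : x * Real.exp (-(x ^ 2)) = y * Real.exp (-(y ^ 2)) := by
      rw [← him x, ← him y, hxy]
    rw [← h1] at h2
    exact mul_right_cancel₀ (Real.exp_ne_zero _) h2
  have hne : ∀ x : ℝ, h x ≠ 0 := by
    intro x hx0
    have := hre x
    rw [hx0, Complex.zero_re] at this
    exact (Real.exp_pos _).ne this
  have hmem : h ∈ NonUnitalStarAlgebra.adjoin ℂ {f, g} := by
    refine add_mem (NonUnitalStarAlgebra.subset_adjoin ℂ _ (Set.mem_insert f {g})) ?_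
    exact SMulMemClass.smul_mem _
      (NonUnitalStarAlgebra.subset_adjoin ℂ _ (Set.mem_insert_of_mem f rfl))
  exact aux_generates h hinj hne _ hmem
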